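/- arXiv:2405.18690 — 3 statements merged into one kernel-verified Lean document; each statement's English description precedes it below -/
import Mathlib

section
/- Let {ψ^k}, {φ^k}, {a^k}, and {ϖ^k} be nonnegative real-valued random sequences adapted to a filtration {𝓕^k} such that E[ψ^{k+1} | 𝓕^k] ≤ (1 + a^k) ψ^k − φ^k + ϖ^k holds for all k ≥ 0, where 𝓕^k contains the information of ψ^ℓ, φ^ℓ, a^ℓ, ϖ^ℓ for 0 ≤ ℓ ≤ k. If Σ_{k=0}^∞ a^k < ∞ and Σ_{k=0}^∞ ϖ^k < ∞ almost surely, then almost surely Σ_{k=0}^∞ φ^k < ∞ and ψ^k converges to a finite nonnegative random variable. -/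
set_option autoImplicit false

open MeasureTheory Filter

set_option maxHeartbeats 1000000
open scoped ENNReal NNReal

/-- Convergence of a supermartingale stopped when the predictable nonnegative
lower-bound process exceeds a level `M`. -/
lemma robbins_siegmund_stopped
    {Ω : Type*} [m0 : MeasurableSpace Ω] (μ : Measure Ω) [IsProbabilityMeasure μ]
    (ℱ : Filtration ℕ m0) (Y ϖ : ℕ → Ω → ℝ)
    (hϖnn : ∀ k ω, 0 ≤ ϖ k ω) (hϖad : Adapted ℱ ϖ)
    (hYad : Adapted ℱ Y) (hYint : ∀ k, Integrable (Y k) μ)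
    (hY0 : ∀ ω, 0 ≤ Y 0 ω)
    (hYlb : ∀ k ω, -(∑ i ∈ Finset.range k, ϖ i ω) ≤ Y k ω)
    (hYcond : ∀ k, μ[Y (k + 1) | ℱ k] ≤ᵐ[μ] Y k)
    (M : ℕ) :
    ∀ᵐ ω ∂μ, (∀ k, ∑ i ∈ Finset.range (k + 1), ϖ i ω ≤ (M : ℝ)) →
      ∃ c, Tendsto (fun k => Y k ω) atTop (nhds c) := by
  classical
  set G : ℕ → Set Ω := fun k => {ω | ∑ i ∈ Finset.range (k + 1), ϖ i ω ≤ (M : ℝ)} with hG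
  set D : ℕ → Ω → ℝ := fun k => (G k).indicator (fun ω => Y (k + 1) ω - Y k ω) with hD
  set Z : ℕ → Ω → ℝ := fun k ω => Y 0 ω + ∑ j ∈ Finset.range k, D j ω with hZ
  have hGmeas : ∀ k, MeasurableSet[ℱ k] (G k) := by
    intro k
    have hsum : Measurable[ℱ k] fun ω => ∑ i ∈ Finset.range (k + 1), ϖ i ω := by
      apply Finset.measurable_sum
      intro i hi
      exact ((hϖad i).mono (ℱ.mono (Nat.lt_succ_iff.mp (Finset.mem_range.mp hi)))
        le_rfl)
    exact measurableSet_le hsum measurable_const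
  have hGanti : ∀ {j k : ℕ}, j ≤ k → G k ⊆ G j := by
    intro j k hjk ω hω
    simp only [hG, Set.mem_setOf_eq] at hω ⊢
    refine le_trans ?_ hω
    apply Finset.sum_le_sum_of_subset_of_nonneg
    · exact Finset.range_subset_range.2 (by omega)
    · intro i _ _; exact hϖnn i ω
  have hDint : ∀ k, Integrable (D k) μ :=
    fun k => (((hYint (k + 1)).sub (hYint k)).indicator (ℱ.le k _ (hGmeas k)))
  have hZint : ∀ k, Integrable (Z k) μ := by
    intro k
    exact (hYint 0).add (integrable_finset_sum _ fun j _ => hDint j)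
  have hZadp : Adapted ℱ Z := by
    apply StronglyAdapted.adapted
    intro k
    apply StronglyMeasurable.add
    · exact ((hYad 0).mono (ℱ.mono (Nat.zero_le k)) le_rfl).stronglyMeasurable
    · apply Finset.stronglyMeasurable_fun_sum
      intro j hj
      have hjk : j + 1 ≤ k := Nat.succ_le_of_lt (Finset.mem_range.mp hj)
      have h1 : StronglyMeasurable[ℱ k] fun ω => Y (j + 1) ω - Y j ω :=
        ((hYad (j + 1)).mono (ℱ.mono hjk) le_rfl).stronglyMeasurable.sub
          ((hYad j).mono (ℱ.mono (by omega)) le_rfl).stronglyMeasurable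
      exact h1.indicator (ℱ.mono (by omega : j ≤ k) _ (hGmeas j))
  have hZsucc : ∀ k, Z (k + 1) = fun ω => Z k ω + D k ω := by
    intro k; funext ω; simp [hZ, Finset.sum_range_succ, add_assoc]
  have hZsm : Supermartingale Z ℱ μ := by
    refine supermartingale_nat hZadp.stronglyAdapted hZint fun k => ?_
    have h1 : μ[Z (k + 1) | ℱ k] =ᵐ[μ] μ[Z k | ℱ k] + μ[D k | ℱ k] := by
      rw [hZsucc k]
      exact condExp_add (hZint k) (hDint k) _
    have h2 : μ[Z k | ℱ k] = Z k :=
      condExp_of_stronglyMeasurable (ℱ.le k) (hZadp k).stronglyMeasurable (hZint k)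
    have h3 : μ[D k | ℱ k] =ᵐ[μ] (G k).indicator (μ[fun ω => Y (k + 1) ω - Y k ω | ℱ k]) :=
      condExp_indicator ((hYint (k + 1)).sub (hYint k)) (hGmeas k)
    have h4 : μ[fun ω => Y (k + 1) ω - Y k ω | ℱ k] ≤ᵐ[μ] 0 := by
      have h5 : μ[fun ω => Y (k + 1) ω - Y k ω | ℱ k]
          =ᵐ[μ] μ[Y (k + 1) | ℱ k] - μ[Y k | ℱ k] :=
        condExp_sub (hYint (k + 1)) (hYint k) _
      have h6 : μ[Y k | ℱ k] = Y k :=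
        condExp_of_stronglyMeasurable (ℱ.le k) (hYad k).stronglyMeasurable (hYint k)
      filter_upwards [h5, hYcond k] with ω hω h7
      simp only [hω, h6, Pi.sub_apply, Pi.zero_apply]
      linarith
    filter_upwards [h1, h3, h4] with ω hω1 hω3 hω4
    rw [hω1]
    simp only [Pi.add_apply, h2]
    have : (G k).indicator (μ[fun ω => Y (k + 1) ω - Y k ω | ℱ k]) ω ≤ 0 := by
      by_cases hmem : ω ∈ G k
      · rw [Set.indicator_of_mem hmem]; exact hω4
      · rw [Set.indicator_of_notMem hmem]
    have h8 : (μ[D k|ℱ k]) ω ≤ 0 := hω3.le.trans this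
    linarith
  -- on G k, Z (k+1) = Y (k+1)
  have hZY : ∀ k ω, ω ∈ G k → Z (k + 1) ω = Y (k + 1) ω := by
    intro k ω hω
    have : ∀ j ∈ Finset.range (k + 1), D j ω = Y (j + 1) ω - Y j ω := by
      intro j hj
      have : ω ∈ G j := hGanti (Nat.lt_succ_iff.mp (Finset.mem_range.mp hj)) hω
      simp [hD, Set.indicator_of_mem this]
    simp only [hZ]
    rw [Finset.sum_congr rfl this, Finset.sum_range_sub (fun j => Y j ω)]
    ring
  -- lower bound
  have hZlb : ∀ k ω, -(M : ℝ) ≤ Z k ω := by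
    intro k ω
    induction k with
    | zero =>
      simp only [hZ, Finset.range_zero, Finset.sum_empty, add_zero]
      have := hY0 ω
      have : (0:ℝ) ≤ M := Nat.cast_nonneg M
      linarith [hY0 ω]
    | succ k ih =>
      by_cases hmem : ω ∈ G k
      · rw [hZY k ω hmem]
        have h1 := hYlb (k + 1) ω
        have h2 : ∑ i ∈ Finset.range (k + 1), ϖ i ω ≤ (M : ℝ) := hmem
        linarith
      · rw [hZsucc k]
        simp [hD, Set.indicator_of_notMem hmem, ih]
  -- L¹ bound
  set R : ℝ := ∫ ω, Y 0 ω ∂μ + 2 * M with hR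
  have hZL1 : ∀ k, ∫ ω, |Z k ω| ∂μ ≤ R := by
    intro k
    have h1 : ∀ ω, |Z k ω| ≤ Z k ω + 2 * M := by
      intro ω
      rcases abs_cases (Z k ω) with ⟨h, _⟩ | ⟨h, _⟩ <;> [skip; have := hZlb k ω] <;> linarith
    have h2 : ∫ ω, |Z k ω| ∂μ ≤ ∫ ω, (Z k ω + 2 * M) ∂μ :=
      integral_mono (hZint k).abs ((hZint k).add (integrable_const _)) h1
    have h3 : ∫ ω, (Z k ω + 2 * M) ∂μ = ∫ ω, Z k ω ∂μ + 2 * M := by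
      rw [integral_add (hZint k) (integrable_const _), integral_const]
      simp
    have h4 : ∫ ω, Z k ω ∂μ ≤ ∫ ω, Z 0 ω ∂μ := by
      have := hZsm.setIntegral_le (Nat.zero_le k) (MeasurableSet.univ (α := Ω))
      simpa [setIntegral_univ] using this
    have h5 : ∫ ω, Z 0 ω ∂μ = ∫ ω, Y 0 ω ∂μ := by
      congr 1; funext ω; simp [hZ]
    linarith
  have hbdd : ∀ k, eLpNorm (Z k) 1 μ ≤ ENNReal.ofReal R := by
    intro k
    rw [eLpNorm_one_eq_lintegral_enorm,
      ← ofReal_integral_norm_eq_lintegral_enorm (hZint k)]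
    exact ENNReal.ofReal_le_ofReal (by simpa [Real.norm_eq_abs] using hZL1 k)
  have hconv : ∀ᵐ ω ∂μ, ∃ c, Tendsto (fun k => Z k ω) atTop (nhds c) := by
    have hneg : ∀ k, eLpNorm ((-Z) k) 1 μ ≤ (R.toNNReal : ℝ≥0∞) := by
      intro k
      simpa [eLpNorm_neg, ENNReal.ofReal] using hbdd k
    filter_upwards [hZsm.neg.exists_ae_tendsto_of_bdd hneg] with ω ⟨c, hc⟩
    exact ⟨-c, by simpa using hc.neg⟩
  filter_upwards [hconv] with ω hω hbound
  obtain ⟨c, hc⟩ := hω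
  refine ⟨c, ?_⟩
  have hall : ∀ k, Z k ω = Y k ω := by
    intro k
    cases k with
    | zero => simp [hZ]
    | succ k => exact hZY k ω (hbound k)
  exact hc.congr (fun k => (hall k))

/-- Robbins–Siegmund: for nonnegative adapted random sequences with
`E[ψ^{k+1}|𝓕^k] ≤ (1 + a^k)ψ^k − φ^k + ϖ^k`, if `Σ a^k < ∞` and `Σ ϖ^k < ∞`
almost surely, then almost surely `Σ φ^k < ∞` and `ψ^k` converges to a finite
nonnegative limit. -/
theorem robbins_siegmund
    {Ω : Type*} [m0 : MeasurableSpace Ω] (μ : Measure Ω) [IsProbabilityMeasure μ]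
    (ℱ : Filtration ℕ m0)
    (ψ φ a ϖ : ℕ → Ω → ℝ)
    (hψnn : ∀ k ω, 0 ≤ ψ k ω) (hφnn : ∀ k ω, 0 ≤ φ k ω)
    (hann : ∀ k ω, 0 ≤ a k ω) (hϖnn : ∀ k ω, 0 ≤ ϖ k ω)
    (hψad : Adapted ℱ ψ) (hφad : Adapted ℱ φ)
    (haad : Adapted ℱ a) (hϖad : Adapted ℱ ϖ)
    (hψint : ∀ k, Integrable (ψ k) μ) (hφint : ∀ k, Integrable (φ k) μ)
    (haint : ∀ k, Integrable (a k) μ) (hϖint : ∀ k, Integrable (ϖ k) μ)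
    (hrec : ∀ k, μ[ψ (k + 1) | ℱ k] ≤ᵐ[μ]
      fun ω => (1 + a k ω) * ψ k ω - φ k ω + ϖ k ω)
    (ha_sum : ∀ᵐ ω ∂μ, Summable fun k => a k ω)
    (hϖ_sum : ∀ᵐ ω ∂μ, Summable fun k => ϖ k ω) :
    ∀ᵐ ω ∂μ, (Summable fun k => φ k ω) ∧
      ∃ c : ℝ, 0 ≤ c ∧ Tendsto (fun k => ψ k ω) atTop (nhds c) := by
  classical
  set A : ℕ → Ω → ℝ := fun k ω => ∏ j ∈ Finset.range k, (1 + a j ω) with hA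
  have hA1 : ∀ k ω, (1 : ℝ) ≤ A k ω := by
    intro k ω
    show (1:ℝ) ≤ ∏ j ∈ Finset.range k, (1 + a j ω)
    calc (1:ℝ) = ∏ _j ∈ Finset.range k, (1:ℝ) := Finset.prod_const_one.symm
      _ ≤ ∏ j ∈ Finset.range k, (1 + a j ω) :=
        Finset.prod_le_prod (fun j _ => zero_le_one) (fun j _ => by linarith [hann j ω])
  have hApos : ∀ k ω, 0 < A k ω := fun k ω => lt_of_lt_of_le one_pos (hA1 k ω)
  have hAsucc : ∀ k ω, A (k + 1) ω = A k ω * (1 + a k ω) := by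
    intro k ω; simp [hA, Finset.prod_range_succ]
  -- measurability of A
  have hAm : ∀ n k, k ≤ n + 1 → Measurable[ℱ n] (A k) := by
    intro n k hk
    apply Finset.measurable_prod
    intro j hj
    have hjn : j ≤ n := by have := Finset.mem_range.mp hj; omega
    exact measurable_const.add ((haad j).mono (ℱ.mono hjn) le_rfl)
  have hAm0 : ∀ k, Measurable (A k) := fun k =>
    (hAm k k (by omega)).mono (ℱ.le k) le_rfl
  -- S and Y
  set S : ℕ → Ω → ℝ := fun k ω => ∑ j ∈ Finset.range k, (φ j ω - ϖ j ω) / A (j + 1) ω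
    with hS
  set Y : ℕ → Ω → ℝ := fun k ω => ψ k ω / A k ω + S k ω with hY
  have hterm_m : ∀ n j, j < n → Measurable[ℱ n] (fun ω => (φ j ω - ϖ j ω) / A (j + 1) ω) := by
    intro n j hj
    have h1 : Measurable[ℱ n] (φ j) := (hφad j).mono (ℱ.mono (by omega)) le_rfl
    have h2 : Measurable[ℱ n] (ϖ j) := (hϖad j).mono (ℱ.mono (by omega)) le_rfl
    exact (h1.sub h2).div (hAm n (j + 1) (by omega))
  have hSm : ∀ n k, k ≤ n + 1 → Measurable[ℱ n] (S k) := by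
    intro n k hk
    apply Finset.measurable_sum
    intro j hj
    have hjn : j ≤ n := by have := Finset.mem_range.mp hj; omega
    have h1 : Measurable[ℱ n] (φ j) := (hφad j).mono (ℱ.mono hjn) le_rfl
    have h2 : Measurable[ℱ n] (ϖ j) := (hϖad j).mono (ℱ.mono hjn) le_rfl
    exact (h1.sub h2).div (hAm n (j + 1) (by omega))
  have hYad : Adapted ℱ Y := by
    intro k
    exact (((hψad k)).div (hAm k k (by omega))).add (hSm k k (by omega))
  have hSint : ∀ k, Integrable (S k) μ := by
    intro k
    apply integrable_finset_sum
    intro j _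
    refine ((hφint j).add (hϖint j)).mono ?_ ?_
    · exact ((((hφad j).mono (ℱ.le j) le_rfl).sub
          ((hϖad j).mono (ℱ.le j) le_rfl)).div (hAm0 (j + 1))).aestronglyMeasurable
    · filter_upwards with ω
      have h1 : |φ j ω - ϖ j ω| / A (j + 1) ω ≤ |φ j ω - ϖ j ω| := by
        apply div_le_self (abs_nonneg _) (hA1 _ _)
      have h2 : |φ j ω - ϖ j ω| ≤ φ j ω + ϖ j ω := by
        rcases abs_cases (φ j ω - ϖ j ω) with ⟨h, _⟩ | ⟨h, _⟩ <;>
          [linarith [hϖnn j ω]; linarith [hφnn j ω]]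
      rw [Real.norm_eq_abs, Real.norm_eq_abs, abs_div,
        abs_of_pos (hApos (j + 1) ω)]
      calc |φ j ω - ϖ j ω| / A (j + 1) ω ≤ |φ j ω - ϖ j ω| := h1
        _ ≤ φ j ω + ϖ j ω := h2
        _ ≤ |φ j ω + ϖ j ω| := le_abs_self _
  have hψAint : ∀ k, Integrable (fun ω => ψ k ω / A k ω) μ := by
    intro k
    refine (hψint k).mono ?_ ?_
    · exact (((hψad k).mono (ℱ.le k) le_rfl).div (hAm0 k)).aestronglyMeasurable
    · filter_upwards with ω
      rw [Real.norm_eq_abs, Real.norm_eq_abs, abs_div, abs_of_pos (hApos k ω),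
        abs_of_nonneg (hψnn k ω)]
      exact div_le_self (hψnn k ω) (hA1 k ω)
  have hYint : ∀ k, Integrable (Y k) μ := fun k => (hψAint k).add (hSint k)
  -- supermartingale inequality for Y
  have hYcond : ∀ k, μ[Y (k + 1) | ℱ k] ≤ᵐ[μ] Y k := by
    intro k
    have hinv_m : Measurable[ℱ k] (fun ω => (A (k + 1) ω)⁻¹) :=
      (hAm k (k + 1) le_rfl).inv
    have hsplit : Y (k + 1) = (fun ω => (A (k + 1) ω)⁻¹ * ψ (k + 1) ω) + S (k + 1) := by
      funext ω
      simp only [hY, Pi.add_apply]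
      rw [div_eq_inv_mul]
    have h1 : μ[Y (k + 1) | ℱ k]
        =ᵐ[μ] μ[fun ω => (A (k + 1) ω)⁻¹ * ψ (k + 1) ω | ℱ k] + μ[S (k + 1) | ℱ k] := by
      rw [hsplit]
      refine condExp_add ?_ (hSint (k + 1)) _
      have := hψAint (k + 1)
      refine this.congr ?_
      filter_upwards with ω
      rw [div_eq_inv_mul]
    have h2 : μ[S (k + 1) | ℱ k] = S (k + 1) :=
      condExp_of_stronglyMeasurable (ℱ.le k) (hSm k (k + 1) le_rfl).stronglyMeasurable
        (hSint (k + 1))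
    have h3 : μ[fun ω => (A (k + 1) ω)⁻¹ * ψ (k + 1) ω | ℱ k]
        =ᵐ[μ] fun ω => (A (k + 1) ω)⁻¹ * (μ[ψ (k + 1) | ℱ k]) ω := by
      have := condExp_stronglyMeasurable_mul_of_bound (ℱ.le k)
        hinv_m.stronglyMeasurable (hψint (k + 1)) 1 ?_
      · exact this
      · filter_upwards with ω
        rw [Real.norm_eq_abs, abs_of_pos (inv_pos.2 (hApos (k + 1) ω))]
        rw [inv_le_one_iff₀]
        right; exact hA1 _ _
    filter_upwards [h1, h3, hrec k] with ω hω1 hω3 hωrec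
    rw [hω1]
    simp only [Pi.add_apply, h2]
    have key : (A (k + 1) ω)⁻¹ * (μ[ψ (k + 1) | ℱ k]) ω
        ≤ ψ k ω / A k ω - (φ k ω - ϖ k ω) / A (k + 1) ω := by
      have hb : (A (k + 1) ω)⁻¹ * (μ[ψ (k + 1) | ℱ k]) ω
          ≤ (A (k + 1) ω)⁻¹ * ((1 + a k ω) * ψ k ω - φ k ω + ϖ k ω) :=
        mul_le_mul_of_nonneg_left hωrec (le_of_lt (inv_pos.2 (hApos (k + 1) ω)))
      refine hb.trans (le_of_eq ?_)
      have ha1 : (0:ℝ) < 1 + a k ω := by linarith [hann k ω]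
      have h01 : A k ω ≠ 0 := ne_of_gt (hApos k ω)
      have h02 : (1 : ℝ) + a k ω ≠ 0 := ne_of_gt ha1
      rw [hAsucc k ω]
      field_simp
      ring
    have hS1 : S (k + 1) ω = S k ω + (φ k ω - ϖ k ω) / A (k + 1) ω := by
      simp [hS, Finset.sum_range_succ]
    have hYk : Y k ω = ψ k ω / A k ω + S k ω := rfl
    calc (μ[fun ω => (A (k + 1) ω)⁻¹ * ψ (k + 1) ω | ℱ k]) ω + S (k + 1) ω
        = (A (k + 1) ω)⁻¹ * (μ[ψ (k + 1) | ℱ k]) ω + S (k + 1) ω := by rw [hω3]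
      _ ≤ ψ k ω / A k ω - (φ k ω - ϖ k ω) / A (k + 1) ω
            + (S k ω + (φ k ω - ϖ k ω) / A (k + 1) ω) := by rw [← hS1]; linarith
      _ = Y k ω := by rw [hYk]; ring
  -- lower bound on Y
  have hYlb : ∀ k ω, -(∑ i ∈ Finset.range k, ϖ i ω) ≤ Y k ω := by
    intro k ω
    have h1 : ∀ j ∈ Finset.range k, -(ϖ j ω) ≤ (φ j ω - ϖ j ω) / A (j + 1) ω := by
      intro j _
      have hA := hA1 (j + 1) ω
      have hApos' := hApos (j + 1) ω
      rw [le_div_iff₀ hApos']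
      nlinarith [hφnn j ω, hϖnn j ω]
    have h2 : -(∑ i ∈ Finset.range k, ϖ i ω) ≤ S k ω := by
      rw [← Finset.sum_neg_distrib]
      exact Finset.sum_le_sum h1
    have h3 : 0 ≤ ψ k ω / A k ω := div_nonneg (hψnn k ω) (le_of_lt (hApos k ω))
    simp only [hY]
    linarith
  have hY0 : ∀ ω, 0 ≤ Y 0 ω := by
    intro ω
    have := hYlb 0 ω
    simpa using this
  -- stopped convergence for every level M
  have hM : ∀ M : ℕ, ∀ᵐ ω ∂μ, (∀ k, ∑ i ∈ Finset.range (k + 1), ϖ i ω ≤ (M : ℝ)) →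
      ∃ c, Tendsto (fun k => Y k ω) atTop (nhds c) := fun M =>
    robbins_siegmund_stopped μ ℱ Y ϖ hϖnn hϖad hYad hYint hY0 hYlb hYcond M
  rw [← ae_all_iff] at hM
  filter_upwards [ha_sum, hϖ_sum, hM] with ω hsa hsϖ hMω
  -- choose the level
  obtain ⟨c, hc⟩ : ∃ c, Tendsto (fun k => Y k ω) atTop (nhds c) := by
    refine hMω ⌈∑' k, ϖ k ω⌉₊ fun k => ?_
    calc ∑ i ∈ Finset.range (k + 1), ϖ i ω ≤ ∑' i, ϖ i ω :=
          Summable.sum_le_tsum _ (fun i _ => hϖnn i ω) hsϖ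
      _ ≤ ⌈∑' i, ϖ i ω⌉₊ := Nat.le_ceil _
  -- bound on A
  set CA : ℝ := Real.exp (∑' k, a k ω) with hCA
  have hAle : ∀ k, A k ω ≤ CA := by
    intro k
    have h1 : A k ω ≤ ∏ j ∈ Finset.range k, Real.exp (a j ω) := by
      apply Finset.prod_le_prod
      · intro j _; linarith [hann j ω]
      · intro j _; rw [add_comm]; exact Real.add_one_le_exp (a j ω)
    rw [← Real.exp_sum] at h1
    refine h1.trans (Real.exp_le_exp.2 ?_)
    exact Summable.sum_le_tsum _ (fun i _ => hann i ω) hsa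
  -- φ/A is summable
  obtain ⟨B, hB⟩ : ∃ B, ∀ n, Y n ω ≤ B := by
    obtain ⟨B, hB⟩ := hc.bddAbove_range
    exact ⟨B, fun n => hB (Set.mem_range_self n)⟩
  have hϖA_le : ∀ j, ϖ j ω / A (j + 1) ω ≤ ϖ j ω :=
    fun j => div_le_self (hϖnn j ω) (hA1 _ _)
  have hφA_sum : Summable (fun j => φ j ω / A (j + 1) ω) := by
    apply summable_of_sum_range_le
      (c := B + ∑' i, ϖ i ω)
      (fun j => div_nonneg (hφnn j ω) (le_of_lt (hApos _ _)))
    intro n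
    have hsplit : ∀ j, (φ j ω - ϖ j ω) / A (j + 1) ω
        = φ j ω / A (j + 1) ω - ϖ j ω / A (j + 1) ω := fun j => sub_div _ _ _
    have h1 : S n ω = ∑ j ∈ Finset.range n, φ j ω / A (j + 1) ω
        - ∑ j ∈ Finset.range n, ϖ j ω / A (j + 1) ω := by
      simp only [hS]
      rw [← Finset.sum_sub_distrib]
      exact Finset.sum_congr rfl fun j _ => hsplit j
    have h2 : ∑ j ∈ Finset.range n, ϖ j ω / A (j + 1) ω ≤ ∑' i, ϖ i ω := by
      calc ∑ j ∈ Finset.range n, ϖ j ω / A (j + 1) ω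
          ≤ ∑ j ∈ Finset.range n, ϖ j ω := Finset.sum_le_sum fun j _ => hϖA_le j
        _ ≤ ∑' i, ϖ i ω := Summable.sum_le_tsum _ (fun i _ => hϖnn i ω) hsϖ
    have h3 : S n ω ≤ Y n ω := by
      have := div_nonneg (hψnn n ω) (le_of_lt (hApos n ω))
      simp only [hY]; linarith
    have h4 := hB n
    linarith [h1, h2, h3]
  have hφ_sum : Summable (fun j => φ j ω) := by
    refine Summable.of_nonneg_of_le (fun j => hφnn j ω) (fun j => ?_)
      (hφA_sum.mul_left CA)
    have h1 : φ j ω = φ j ω / A (j + 1) ω * A (j + 1) ω :=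
      (div_mul_cancel₀ _ (ne_of_gt (hApos _ _))).symm
    calc φ j ω = φ j ω / A (j + 1) ω * A (j + 1) ω := h1
      _ ≤ φ j ω / A (j + 1) ω * CA :=
          mul_le_mul_of_nonneg_left (hAle _) (div_nonneg (hφnn j ω) (le_of_lt (hApos _ _)))
      _ = CA * (φ j ω / A (j + 1) ω) := mul_comm _ _
  refine ⟨hφ_sum, ?_⟩
  -- convergence of S
  have hϖA_sum : Summable (fun j => ϖ j ω / A (j + 1) ω) :=
    Summable.of_nonneg_of_le (fun j => div_nonneg (hϖnn j ω) (le_of_lt (hApos _ _)))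
      hϖA_le hsϖ
  have hSsum : Summable (fun j => (φ j ω - ϖ j ω) / A (j + 1) ω) := by
    refine ((hφA_sum.sub hϖA_sum).congr fun j => ?_)
    rw [sub_div]
  have hStend : Tendsto (fun n => S n ω) atTop (nhds (∑' j, (φ j ω - ϖ j ω) / A (j + 1) ω)) :=
    hSsum.hasSum.tendsto_sum_nat
  set s : ℝ := ∑' j, (φ j ω - ϖ j ω) / A (j + 1) ω with hs
  have hψA_tend : Tendsto (fun n => ψ n ω / A n ω) atTop (nhds (c - s)) := by
    have := hc.sub hStend
    refine this.congr fun n => ?_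
    simp only [hY]; ring
  -- convergence of A
  have hAmono : Monotone (fun k => A k ω) := by
    apply monotone_nat_of_le_succ
    intro k
    rw [hAsucc k ω]
    nlinarith [hApos k ω, hann k ω]
  have hAtend : Tendsto (fun k => A k ω) atTop (nhds (⨆ k, A k ω)) :=
    tendsto_atTop_ciSup hAmono ⟨CA, fun x ⟨k, hk⟩ => hk ▸ hAle k⟩
  have hψtend : Tendsto (fun k => ψ k ω) atTop (nhds ((c - s) * ⨆ k, A k ω)) := by
    have := hψA_tend.mul hAtend
    refine this.congr fun k => ?_
    exact div_mul_cancel₀ _ (ne_of_gt (hApos k ω))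
  exact ⟨(c - s) * ⨆ k, A k ω, ge_of_tendsto' hψtend (fun k => hψnn k ω), hψtend⟩
end

section
/- Under the stated DMPC setup, suppose at time t each subsystem i has a feasible solution, i.e., there are input sequences ũ_i(0),…,ũ_i(N−1) and state sequences x̃_i(0),…,x̃_i(N) with x̃_i(ℓ+1) = A_i x̃_i(ℓ) + B_i ũ_i(ℓ), x̃_i(ℓ) ∈ 𝒳_i and ũ_i(ℓ) ∈ 𝒰_i for ℓ = 0,…,N−1, x̃_i(N) ∈ 𝒳_i^f, and Σ_{i=1}^M ( Ψ_{x_i} x̃_i(ℓ) + Ψ_{u_i} ũ_i(ℓ) ) ≤ (1 − ε M ℓ) 1_p componentwise for ℓ = 0,…,N−1. Then the shifted sequences û_i(ℓ) := ũ_i(ℓ+1) for ℓ = 0,…,N−2 and û_i(N−1) := K_i x̃_i(N), with corresponding states x̂_i(0) := x̃_i(1), x̂_i(ℓ+1) = A_i x̂_i(ℓ) + B_i û_i(ℓ), form a feasible solution at time t+1: x̂_i(ℓ) ∈ 𝒳_i and û_i(ℓ) ∈ 𝒰_i for ℓ = 0,…,N−1, x̂_i(N) ∈ 𝒳_i^f,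 and Σ_{i=1}^M ( Ψ_{x_i} x̂_i(ℓ) + Ψ_{u_i} û_i(ℓ) ) ≤ (1 − ε M ℓ) 1_p for ℓ = 0,…,N−1. -/
set_option autoImplicit false

open Matrix Finset

/-- recursive feasibility of the shifted DMPC candidate solution.
If at time `t` the sequences `(x̃_i, ũ_i)` are feasible (local state/input
constraints, terminal constraint, and tightened global constraints), then the
one-step shifted sequences `(x̂_i, û_i)`, completed with the terminal controller
`û_i(N−1) = K_i x̃_i(N)`, are feasible at time `t+1`. -/
theorem dmpc_recursive_feasibility
    (M N p : ℕ) (hM : 0 < M) (hN : 1 ≤ N)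
    (n m : Fin M → ℕ)
    (A : ∀ i, Matrix (Fin (n i)) (Fin (n i)) ℝ)
    (B : ∀ i, Matrix (Fin (n i)) (Fin (m i)) ℝ)
    (K : ∀ i, Matrix (Fin (m i)) (Fin (n i)) ℝ)
    (X : ∀ i, Set (Fin (n i) → ℝ)) (U : ∀ i, Set (Fin (m i) → ℝ))
    (Xf : ∀ i, Set (Fin (n i) → ℝ))
    (Ψx : ∀ i, Matrix (Fin p) (Fin (n i)) ℝ)
    (Ψu : ∀ i, Matrix (Fin p) (Fin (m i)) ℝ)
    (ε : ℝ) (hε0 : 0 ≤ ε) (hε1 : ε < 1 / (M * N))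
    -- properties of the terminal sets
    (hXfX : ∀ i, Xf i ⊆ X i)
    (hXfU : ∀ i, ∀ z ∈ Xf i, (K i).mulVec z ∈ U i)
    (hXfInv : ∀ i, ∀ z ∈ Xf i, (A i + B i * K i).mulVec z ∈ Xf i)
    (hXfGlob : ∀ z : ∀ i, Fin (n i) → ℝ, (∀ i, z i ∈ Xf i) → ∀ q : Fin p,
      ∑ i, ((Ψx i + Ψu i * K i).mulVec (z i)) q ≤ 1 - ε * M * N)
    -- the feasible solution at time t
    (xt : ∀ i, ℕ → Fin (n i) → ℝ) (ut : ∀ i, ℕ → Fin (m i) → ℝ)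
    (hdyn : ∀ i, ∀ ℓ < N, xt i (ℓ + 1) = (A i).mulVec (xt i ℓ) + (B i).mulVec (ut i ℓ))
    (hxtX : ∀ i, ∀ ℓ < N, xt i ℓ ∈ X i)
    (hutU : ∀ i, ∀ ℓ < N, ut i ℓ ∈ U i)
    (hxtN : ∀ i, xt i N ∈ Xf i)
    (hglob : ∀ ℓ < N, ∀ q : Fin p,
      ∑ i, (((Ψx i).mulVec (xt i ℓ)) q + ((Ψu i).mulVec (ut i ℓ)) q) ≤ 1 - ε * M * ℓ)
    -- the shifted candidate solution for time t+1
    (xh : ∀ i, ℕ → Fin (n i) → ℝ) (uh : ∀ i, ℕ → Fin (m i) → ℝ)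
    (huh : ∀ i, ∀ ℓ, ℓ + 1 < N → uh i ℓ = ut i (ℓ + 1))
    (huhN : ∀ i, uh i (N - 1) = (K i).mulVec (xt i N))
    (hxh0 : ∀ i, xh i 0 = xt i 1)
    (hxhdyn : ∀ i, ∀ ℓ < N, xh i (ℓ + 1) = (A i).mulVec (xh i ℓ) + (B i).mulVec (uh i ℓ)) :
    (∀ i, ∀ ℓ < N, xh i ℓ ∈ X i) ∧
    (∀ i, ∀ ℓ < N, uh i ℓ ∈ U i) ∧
    (∀ i, xh i N ∈ Xf i) ∧
    (∀ ℓ < N, ∀ q : Fin p,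
      ∑ i, (((Ψx i).mulVec (xh i ℓ)) q + ((Ψu i).mulVec (uh i ℓ)) q) ≤ 1 - ε * M * ℓ) := by
  have hN1 : N - 1 + 1 = N := by omega
  have hN1lt : N - 1 < N := by omega
  have hxe : ∀ i, ∀ ℓ, ℓ < N → xh i ℓ = xt i (ℓ + 1) := by
    intro i ℓ
    induction ℓ with
    | zero => intro _; exact hxh0 i
    | succ k ih =>
      intro hk
      have hkN : k < N := Nat.lt_of_succ_lt hk
      rw [hxhdyn i k hkN, ih hkN, huh i k hk, ← hdyn i (k + 1) hk]
  have hterm : ∀ i, xh i N = (A i + B i * K i).mulVec (xt i N) := by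
    intro i
    calc xh i N = xh i (N - 1 + 1) := by rw [hN1]
      _ = (A i).mulVec (xh i (N - 1)) + (B i).mulVec (uh i (N - 1)) :=
          hxhdyn i (N - 1) hN1lt
      _ = (A i).mulVec (xt i N) + (B i).mulVec ((K i).mulVec (xt i N)) := by
          rw [hxe i (N - 1) hN1lt, hN1, huhN i]
      _ = (A i + B i * K i).mulVec (xt i N) := by
          rw [Matrix.add_mulVec, ← Matrix.mulVec_mulVec]
  refine ⟨?_, ?_, ?_, ?_⟩
  · intro i ℓ hℓ
    rw [hxe i ℓ hℓ]
    rcases Nat.lt_or_ge (ℓ + 1) N with h | h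
    · exact hxtX i (ℓ + 1) h
    · have : ℓ + 1 = N := by omega
      rw [this]; exact hXfX i (hxtN i)
  · intro i ℓ hℓ
    rcases Nat.lt_or_ge (ℓ + 1) N with h | h
    · rw [huh i ℓ h]; exact hutU i (ℓ + 1) h
    · have : ℓ = N - 1 := by omega
      rw [this, huhN i]; exact hXfU i _ (hxtN i)
  · intro i
    rw [hterm i]; exact hXfInv i _ (hxtN i)
  · intro ℓ hℓ q
    have hεM : (0:ℝ) ≤ ε * M := by positivity
    rcases Nat.lt_or_ge (ℓ + 1) N with h | h
    · have key := hglob (ℓ + 1) h q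
      have heq : ∀ i, ((Ψx i).mulVec (xh i ℓ)) q + ((Ψu i).mulVec (uh i ℓ)) q
          = ((Ψx i).mulVec (xt i (ℓ + 1))) q + ((Ψu i).mulVec (ut i (ℓ + 1))) q := by
        intro i; rw [hxe i ℓ hℓ, huh i ℓ h]
      rw [Finset.sum_congr rfl (fun i _ => heq i)]
      refine le_trans key ?_
      have : (ℓ : ℝ) ≤ (ℓ : ℝ) + 1 := by linarith
      push_cast
      nlinarith [hεM]
    · have hℓeq : ℓ = N - 1 := by omega
      have key := hXfGlob (fun i => xt i N) (fun i => hxtN i) q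
      have heq : ∀ i, ((Ψx i).mulVec (xh i ℓ)) q + ((Ψu i).mulVec (uh i ℓ)) q
          = ((Ψx i + Ψu i * K i).mulVec (xt i N)) q := by
        intro i
        rw [hℓeq, hxe i (N - 1) hN1lt, hN1, huhN i,
          Matrix.add_mulVec, ← Matrix.mulVec_mulVec]
        simp [Pi.add_apply]
      rw [Finset.sum_congr rfl (fun i _ => heq i)]
      refine le_trans key ?_
      have hcast : ((ℓ : ℝ)) = (N : ℝ) - 1 := by
        rw [hℓeq]; push_cast [Nat.cast_sub hN]; ring
      rw [hcast]
      nlinarith [hεM]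
end

section
/- Let A ∈ ℝ^{n×n}, B ∈ ℝ^{n×m}, K ∈ ℝ^{m×n}, and let Q ∈ ℝ^{n×n}, R ∈ ℝ^{m×m}, P ∈ ℝ^{n×n} be symmetric matrices satisfying the Lyapunov/Riccati identity (A + BK)ᵀ P (A + BK) − P = −(Q + Kᵀ R K). Given inputs u(0),…,u(N−1) ∈ ℝ^m and states defined by x(ℓ+1) = A x(ℓ) + B u(ℓ), define the cost J(x(0), u) := Σ_{ℓ=0}^{N−1} ( x(ℓ)ᵀ Q x(ℓ) + u(ℓ)ᵀ R u(ℓ) ) + x(N)ᵀ P x(N). Let the shifted input sequence be û(ℓ) := u(ℓ+1) for ℓ = 0,…,N−2 and û(N−1) := K x(N), with states starting from x(1). Then J(x(1), û) − J(x(0), u) = −x(0)ᵀ Q x(0) − u(0)ᵀ R u(0). -/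
set_option autoImplicit false

open Matrix Finset

/-- one-step shift identity for the MPC cost under the
Lyapunov/Riccati identity `(A+BK)ᵀ P (A+BK) − P = −(Q + Kᵀ R K)`:
`J(x(1), û) − J(x(0), u) = −x(0)ᵀ Q x(0) − u(0)ᵀ R u(0)`. -/
theorem shifted_cost_decrease
    (n m N : ℕ) (hN : 1 ≤ N)
    (A : Matrix (Fin n) (Fin n) ℝ) (B : Matrix (Fin n) (Fin m) ℝ)
    (K : Matrix (Fin m) (Fin n) ℝ)
    (Q P : Matrix (Fin n) (Fin n) ℝ) (R : Matrix (Fin m) (Fin m) ℝ)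
    (hQ : Q.IsSymm) (hR : R.IsSymm) (hP : P.IsSymm)
    (hRiccati : (A + B * K)ᵀ * P * (A + B * K) - P = -(Q + Kᵀ * R * K))
    (x : ℕ → Fin n → ℝ) (u : ℕ → Fin m → ℝ)
    (hdyn : ∀ ℓ, x (ℓ + 1) = A.mulVec (x ℓ) + B.mulVec (u ℓ))
    (uh : ℕ → Fin m → ℝ) (xh : ℕ → Fin n → ℝ)
    (huh : ∀ ℓ, ℓ + 1 < N → uh ℓ = u (ℓ + 1))
    (huhN : uh (N - 1) = K.mulVec (x N))
    (hxh0 : xh 0 = x 1)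
    (hxhdyn : ∀ ℓ, xh (ℓ + 1) = A.mulVec (xh ℓ) + B.mulVec (uh ℓ)) :
    ((∑ ℓ ∈ range N, (xh ℓ ⬝ᵥ Q.mulVec (xh ℓ) + uh ℓ ⬝ᵥ R.mulVec (uh ℓ)))
        + xh N ⬝ᵥ P.mulVec (xh N))
      - ((∑ ℓ ∈ range N, (x ℓ ⬝ᵥ Q.mulVec (x ℓ) + u ℓ ⬝ᵥ R.mulVec (u ℓ)))
        + x N ⬝ᵥ P.mulVec (x N))
      = -(x 0 ⬝ᵥ Q.mulVec (x 0)) - u 0 ⬝ᵥ R.mulVec (u 0) := by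
  obtain ⟨M, rfl⟩ : ∃ M, N = M + 1 := ⟨N - 1, (Nat.succ_pred_eq_of_pos hN).symm⟩
  -- shifted states agree with x (ℓ+1) for ℓ ≤ M
  have hxh : ∀ ℓ, ℓ ≤ M → xh ℓ = x (ℓ + 1) := by
    intro ℓ hℓ
    induction ℓ with
    | zero => exact hxh0
    | succ k ih =>
      have hk : k ≤ M := Nat.le_of_succ_le hℓ
      rw [hxhdyn, ih hk, huh k (by omega), ← hdyn]
  have hxhM : xh M = x (M + 1) := hxh M le_rfl
  have huhM : uh M = K.mulVec (x (M + 1)) := by simpa using huhN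
  -- terminal shifted state
  have hxhN : xh (M + 1) = (A + B * K).mulVec (x (M + 1)) := by
    rw [hxhdyn, hxhM, huhM, add_mulVec, ← mulVec_mulVec]
  -- quadratic form transfer
  have hquad : ∀ (p q : ℕ) (C : Matrix (Fin q) (Fin p) ℝ) (v : Fin p → ℝ) (w : Fin q → ℝ),
      v ⬝ᵥ Cᵀ.mulVec w = C.mulVec v ⬝ᵥ w := by
    intro p q C v w
    rw [dotProduct_mulVec, vecMul_transpose]
  have hterm : xh (M + 1) ⬝ᵥ P.mulVec (xh (M + 1))
      = x (M + 1) ⬝ᵥ P.mulVec (x (M + 1))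
        - x (M + 1) ⬝ᵥ Q.mulVec (x (M + 1))
        - K.mulVec (x (M + 1)) ⬝ᵥ R.mulVec (K.mulVec (x (M + 1))) := by
    have h1 : ((A + B * K)ᵀ * P * (A + B * K)) = P - (Q + Kᵀ * R * K) := by
      have := hRiccati; linear_combination (norm := noncomm_ring) this
    have h2 : xh (M + 1) ⬝ᵥ P.mulVec (xh (M + 1))
        = x (M + 1) ⬝ᵥ ((A + B * K)ᵀ * P * (A + B * K)).mulVec (x (M + 1)) := by
      rw [hxhN, Matrix.mul_assoc, ← mulVec_mulVec, hquad, mulVec_mulVec]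
    rw [h2, h1, sub_mulVec, add_mulVec, dotProduct_sub, dotProduct_add]
    have h3 : x (M + 1) ⬝ᵥ (Kᵀ * R * K) *ᵥ x (M + 1)
        = K *ᵥ x (M + 1) ⬝ᵥ R *ᵥ K *ᵥ x (M + 1) := by
      rw [Matrix.mul_assoc, ← mulVec_mulVec, hquad, mulVec_mulVec]
    rw [h3]
    ring
  -- split the sums
  have hsplit1 : (∑ ℓ ∈ range (M + 1), (x ℓ ⬝ᵥ Q.mulVec (x ℓ) + u ℓ ⬝ᵥ R.mulVec (u ℓ)))
      = (x 0 ⬝ᵥ Q.mulVec (x 0) + u 0 ⬝ᵥ R.mulVec (u 0))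
        + ∑ ℓ ∈ range M, (x (ℓ+1) ⬝ᵥ Q.mulVec (x (ℓ+1)) + u (ℓ+1) ⬝ᵥ R.mulVec (u (ℓ+1))) := by
    rw [Finset.sum_range_succ' (fun ℓ => x ℓ ⬝ᵥ Q.mulVec (x ℓ) + u ℓ ⬝ᵥ R.mulVec (u ℓ)) M]
    ring
  have hsplit2 : (∑ ℓ ∈ range (M + 1), (xh ℓ ⬝ᵥ Q.mulVec (xh ℓ) + uh ℓ ⬝ᵥ R.mulVec (uh ℓ)))
      = (∑ ℓ ∈ range M, (x (ℓ+1) ⬝ᵥ Q.mulVec (x (ℓ+1)) + u (ℓ+1) ⬝ᵥ R.mulVec (u (ℓ+1))))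
        + (x (M+1) ⬝ᵥ Q.mulVec (x (M+1)) + K.mulVec (x (M+1)) ⬝ᵥ R.mulVec (K.mulVec (x (M+1)))) := by
    rw [Finset.sum_range_succ, hxhM, huhM]
    congr 1
    apply Finset.sum_congr rfl
    intro ℓ hℓ
    rw [Finset.mem_range] at hℓ
    rw [hxh ℓ (by omega), huh ℓ (by omega)]
  rw [hsplit1, hsplit2, hterm]
  ring
end
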